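/- Let ε > 0, α > 0, k > 0, h > 0 and z > k·h. Then for every V ≥ 0, the function S ↦ φ(V + z + k·S, S) is strictly convex on the interval [−h, ∞). (Note V + z + k·S ≥ z − k·h > 0 on this interval, so the expression is well defined.) -/

import Mathlib

/-- The imaginary error function, `erfi x = ∫ u in 0..x, exp (u²)`
(the conventional erfi scaled by `√π / 2`). -/
noncomputable def erfi (x : ℝ) : ℝ := ∫ u in (0:ℝ)..x, Real.exp (u ^ 2)

/-- The potential function `φ(x, y) = ε·√(α·x)·(2·∫₀^{y/√(4αx)} erfi(u) du − 1)`. -/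
noncomputable def phi (ε α x y : ℝ) : ℝ :=
  ε * Real.sqrt (α * x) *
    (2 * (∫ u in (0:ℝ)..(y / Real.sqrt (4 * α * x)), erfi u) - 1)

lemma erfi_hasDerivAt (x : ℝ) : HasDerivAt erfi (Real.exp (x ^ 2)) x := by
  have hc : Continuous fun u : ℝ => Real.exp (u ^ 2) := by continuity
  exact intervalIntegral.integral_hasDerivAt_right (hc.intervalIntegrable _ _)
    (hc.stronglyMeasurableAtFilter _ _) hc.continuousAt

lemma erfi_continuous : Continuous erfi :=
  continuous_iff_continuousAt.2 fun x => (erfi_hasDerivAt x).differentiableAt.continuousAt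

lemma erfi_zero : erfi 0 = 0 := intervalIntegral.integral_same

lemma integral_erfi (w : ℝ) :
    ∫ u in (0:ℝ)..w, erfi u = w * erfi w - (Real.exp (w ^ 2) - 1) / 2 := by
  have key : ∀ u ∈ Set.uIcc (0:ℝ) w,
      HasDerivAt (fun t => t * erfi t - Real.exp (t ^ 2) / 2) (erfi u) u := by
    intro u _
    have h1 := (hasDerivAt_id u).mul (erfi_hasDerivAt u)
    have h2 : HasDerivAt (fun t : ℝ => t ^ 2) (2 * u) u := by
      simpa using hasDerivAt_pow 2 u
    have h3 := h2.exp.div_const 2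
    have h4 := h1.sub h3
    refine h4.congr_deriv ?_
    simp only [id_eq, one_mul]
    ring
  rw [intervalIntegral.integral_eq_sub_of_hasDerivAt key
    (erfi_continuous.intervalIntegrable _ _)]
  simp [erfi_zero]
  ring

/-- The simplified potential. -/
noncomputable def Fφ (ε α c k S : ℝ) : ℝ :=
  ε * (S * erfi (S / (2 * Real.sqrt (α * (c + k * S)))) -
    Real.sqrt (α * (c + k * S)) *
      Real.exp ((S / (2 * Real.sqrt (α * (c + k * S)))) ^ 2))

/-- The first derivative of `Fφ` in `S`. -/
noncomputable def Gφ (ε α c k S : ℝ) : ℝ :=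
  ε * (erfi (S / (2 * Real.sqrt (α * (c + k * S)))) -
    α * k * Real.exp ((S / (2 * Real.sqrt (α * (c + k * S)))) ^ 2) /
      (2 * Real.sqrt (α * (c + k * S))))

/-- The second derivative of `Fφ` in `S`. -/
noncomputable def G2φ (ε α c k S : ℝ) : ℝ :=
  ε * Real.exp ((S / (2 * Real.sqrt (α * (c + k * S)))) ^ 2) *
    (2 * (Real.sqrt (α * (c + k * S)) -
        α * k * (S / (2 * Real.sqrt (α * (c + k * S))))) ^ 2 + α ^ 2 * k ^ 2) /
    (4 * Real.sqrt (α * (c + k * S)) ^ 3)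

lemma phi_eq (ε α x y : ℝ) (hx : 0 < α * x) :
    phi ε α x y = ε * (y * erfi (y / (2 * Real.sqrt (α * x))) -
      Real.sqrt (α * x) * Real.exp ((y / (2 * Real.sqrt (α * x))) ^ 2)) := by
  have hs : 0 < Real.sqrt (α * x) := Real.sqrt_pos.2 hx
  have h4 : Real.sqrt (4 * α * x) = 2 * Real.sqrt (α * x) := by
    rw [show 4 * α * x = 2 ^ 2 * (α * x) by ring, Real.sqrt_mul (by positivity),
      Real.sqrt_sq (by norm_num)]
  unfold phi
  rw [h4, integral_erfi]
  have hy : y = 2 * Real.sqrt (α * x) * (y / (2 * Real.sqrt (α * x))) := by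
    field_simp
  set w := y / (2 * Real.sqrt (α * x)) with hw
  rw [hy]
  ring

section derivs

variable {ε α c k S : ℝ}

lemma hasDerivAt_inner (hx : 0 < c + k * S) :
    HasDerivAt (fun S => α * (c + k * S)) (α * k) S := by
  have h1 : HasDerivAt (fun S : ℝ => c + k * S) k S := by
    simpa using ((hasDerivAt_id S).const_mul k).const_add c
  exact h1.const_mul α

lemma hasDerivAt_s (hα : 0 < α) (hx : 0 < c + k * S) :
    HasDerivAt (fun S => Real.sqrt (α * (c + k * S)))
      (α * k / (2 * Real.sqrt (α * (c + k * S)))) S := by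
  have h := (hasDerivAt_inner (α := α) hx).sqrt (by positivity)
  convert h using 1

lemma hasDerivAt_w (hα : 0 < α) (hx : 0 < c + k * S) :
    HasDerivAt (fun S => S / (2 * Real.sqrt (α * (c + k * S))))
      ((Real.sqrt (α * (c + k * S)) -
          α * k * (S / (2 * Real.sqrt (α * (c + k * S))))) /
        (2 * Real.sqrt (α * (c + k * S)) ^ 2)) S := by
  have hs0 : 0 < Real.sqrt (α * (c + k * S)) := Real.sqrt_pos.2 (by positivity)
  have hden : HasDerivAt (fun S => 2 * Real.sqrt (α * (c + k * S)))
      (2 * (α * k / (2 * Real.sqrt (α * (c + k * S))))) S :=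
    (hasDerivAt_s hα hx).const_mul 2
  have h := (hasDerivAt_id S).div hden (by positivity)
  refine h.congr_deriv ?_
  set s := Real.sqrt (α * (c + k * S)) with hsdef
  have hs' : s ≠ 0 := ne_of_gt hs0
  simp only [id_eq]
  field_simp

lemma hasDerivAt_F (hα : 0 < α) (hx : 0 < c + k * S) :
    HasDerivAt (fun S => Fφ ε α c k S) (Gφ ε α c k S) S := by
  have hs0 : 0 < Real.sqrt (α * (c + k * S)) := Real.sqrt_pos.2 (by positivity)
  set s := Real.sqrt (α * (c + k * S)) with hsdef
  set w := S / (2 * s) with hwdef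
  set w' := (s - α * k * w) / (2 * s ^ 2) with hw'def
  have hw : HasDerivAt (fun S => S / (2 * Real.sqrt (α * (c + k * S)))) w' S :=
    hasDerivAt_w hα hx
  have herfiw : HasDerivAt (fun S => erfi (S / (2 * Real.sqrt (α * (c + k * S)))))
      (Real.exp (w ^ 2) * w') S := by
    have := (erfi_hasDerivAt w).comp S hw
    exact this
  have hw2 : HasDerivAt (fun S => (S / (2 * Real.sqrt (α * (c + k * S)))) ^ 2)
      (2 * w * w') S := by
    have := hw.pow 2
    refine this.congr_deriv ?_
    push_cast
    ring
  have hexpw : HasDerivAt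
      (fun S => Real.exp ((S / (2 * Real.sqrt (α * (c + k * S)))) ^ 2))
      (Real.exp (w ^ 2) * (2 * w * w')) S := hw2.exp
  have hs : HasDerivAt (fun S => Real.sqrt (α * (c + k * S)))
      (α * k / (2 * s)) S := hasDerivAt_s hα hx
  have h1 := (hasDerivAt_id S).mul herfiw
  have h2 := hs.mul hexpw
  have h3 := (h1.sub h2).const_mul ε
  refine h3.congr_deriv ?_
  unfold Gφ
  rw [← hsdef, ← hwdef]
  have hSw : S = 2 * s * w := by rw [hwdef]; field_simp
  rw [hSw]
  simp only [id_eq]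
  field_simp
  ring

lemma hasDerivAt_G (hα : 0 < α) (hx : 0 < c + k * S) :
    HasDerivAt (fun S => Gφ ε α c k S) (G2φ ε α c k S) S := by
  have hs0 : 0 < Real.sqrt (α * (c + k * S)) := Real.sqrt_pos.2 (by positivity)
  set s := Real.sqrt (α * (c + k * S)) with hsdef
  set w := S / (2 * s) with hwdef
  set w' := (s - α * k * w) / (2 * s ^ 2) with hw'def
  have hw : HasDerivAt (fun S => S / (2 * Real.sqrt (α * (c + k * S)))) w' S :=
    hasDerivAt_w hα hx
  have herfiw : HasDerivAt (fun S => erfi (S / (2 * Real.sqrt (α * (c + k * S)))))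
      (Real.exp (w ^ 2) * w') S := by
    have := (erfi_hasDerivAt w).comp S hw
    exact this
  have hw2 : HasDerivAt (fun S => (S / (2 * Real.sqrt (α * (c + k * S)))) ^ 2)
      (2 * w * w') S := by
    have := hw.pow 2
    refine this.congr_deriv ?_
    push_cast
    ring
  have hexpw : HasDerivAt
      (fun S => Real.exp ((S / (2 * Real.sqrt (α * (c + k * S)))) ^ 2))
      (Real.exp (w ^ 2) * (2 * w * w')) S := hw2.exp
  have hs : HasDerivAt (fun S => Real.sqrt (α * (c + k * S)))
      (α * k / (2 * s)) S := hasDerivAt_s hα hx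
  have hden : HasDerivAt (fun S => 2 * Real.sqrt (α * (c + k * S)))
      (2 * (α * k / (2 * s))) S := hs.const_mul 2
  have hnum : HasDerivAt
      (fun S => α * k * Real.exp ((S / (2 * Real.sqrt (α * (c + k * S)))) ^ 2))
      (α * k * (Real.exp (w ^ 2) * (2 * w * w'))) S := hexpw.const_mul (α * k)
  have hq := hnum.div hden (by positivity)
  have h3 := (herfiw.sub hq).const_mul ε
  refine h3.congr_deriv ?_
  unfold G2φ
  rw [← hsdef, ← hwdef]
  rw [hw'def]
  field_simp
  ring

end derivs

/-- Convexity: the shifted potential `Φ(V, S) = φ(V + z + k·S, S)` is strictly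
convex in `S` on `[−h, ∞)`. -/
theorem shifted_potential_strictConvexOn (ε α k h z : ℝ)
    (hε : 0 < ε) (hα : 0 < α) (hk : 0 < k) (hh : 0 < h) (hz : k * h < z)
    (V : ℝ) (hV : 0 ≤ V) :
    StrictConvexOn ℝ (Set.Ici (-h)) (fun S => phi ε α (V + z + k * S) S) := by
  set c := V + z with hc
  have hx : ∀ S ∈ Set.Ici (-h), 0 < c + k * S := by
    intro S hS
    have : k * (-h) ≤ k * S := mul_le_mul_of_nonneg_left hS hk.le
    have hzc : z ≤ c := by rw [hc]; linarith
    nlinarith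
  have key : StrictConvexOn ℝ (Set.Ici (-h)) (fun S => Fφ ε α c k S) := by
    apply strictConvexOn_of_deriv2_pos (convex_Ici _)
    · intro S hS
      exact (hasDerivAt_F hα (hx S hS)).continuousAt.continuousWithinAt
    · intro S hS
      rw [interior_Ici] at hS
      have hxS : 0 < c + k * S := hx S (Set.mem_Ici.2 (le_of_lt hS))
      have hopen : IsOpen {t : ℝ | 0 < c + k * t} :=
        isOpen_lt continuous_const (by continuity)
      have hev : ∀ᶠ t in nhds S, 0 < c + k * t := hopen.mem_nhds hxS
      have h1 : deriv (fun S => Fφ ε α c k S) =ᶠ[nhds S] fun S => Gφ ε α c k S :=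
        hev.mono fun t ht => (hasDerivAt_F hα ht).deriv
      have h2 : deriv^[2] (fun S => Fφ ε α c k S) S
          = deriv (deriv (fun S => Fφ ε α c k S)) S := rfl
      rw [h2, h1.deriv_eq, (hasDerivAt_G hα hxS).deriv]
      have hs0 : 0 < Real.sqrt (α * (c + k * S)) := Real.sqrt_pos.2 (by positivity)
      unfold G2φ
      positivity
  have heq : ∀ S ∈ Set.Ici (-h), phi ε α (V + z + k * S) S = Fφ ε α c k S := by
    intro S hS
    have hxS : 0 < α * (c + k * S) := by
      have := hx S hS; positivity
    have : phi ε α (c + k * S) S = Fφ ε α c k S := by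
      rw [phi_eq ε α (c + k * S) S hxS]; rfl
    simpa [hc] using this
  refine ⟨key.1, fun x hx' y hy' hxy a b ha hb hab => ?_⟩
  have hmem : a • x + b • y ∈ Set.Ici (-h) := key.1 hx' hy' ha.le hb.le hab
  have h1 := key.2 hx' hy' hxy ha hb hab
  simp only at h1 ⊢
  rw [heq _ hmem, heq _ hx', heq _ hy']
  exact h1
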